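/- Let X, H, E, Z, S, y be random variables with S a deterministic function of Z, Z a deterministic function of E (so σ(S) ⊆ σ(Z) ⊆ σ(E)). Then I(H; y | X, S) ≤ I(H; y | X, E) + [I(H; E | X) − I(H; Z | X)] + [I(H; Z | X) − I(H; S | X)], where each bracketed term is non-negative. -/

import Mathlib

open Finset Real

/-- Probability that a random variable `X` on a finite sample space with
weight function `p` takes the value `x`. -/
noncomputable def pr {Ω : Type*} [Fintype Ω] (p : Ω → ℝ) {α : Type*} [DecidableEq α]
    (X : Ω → α) (x : α) : ℝ :=
  ∑ ω, if X ω = x then p ω else 0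

/-- Conditional Shannon entropy `H(Y | X)` for finite random variables. -/
noncomputable def condEnt {Ω : Type*} [Fintype Ω] (p : Ω → ℝ) {α β : Type*}
    [Fintype α] [Fintype β] [DecidableEq α] [DecidableEq β]
    (Y : Ω → α) (X : Ω → β) : ℝ :=
  -∑ x : β, ∑ y : α,
    pr p (fun ω => (X ω, Y ω)) (x, y) *
      Real.log (pr p (fun ω => (X ω, Y ω)) (x, y) / pr p X x)

/-- Conditional mutual information `I(A; B | C)` for finite random variables,
defined symmetrically via conditional entropies. -/
noncomputable def condMI {Ω : Type*} [Fintype Ω] (p : Ω → ℝ) {α β γ : Type*}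
    [Fintype α] [Fintype β] [Fintype γ] [DecidableEq α] [DecidableEq β] [DecidableEq γ]
    (A : Ω → α) (B : Ω → β) (C : Ω → γ) : ℝ :=
  condEnt p A C + condEnt p B C - condEnt p (fun ω => (A ω, B ω)) C

section Aux
variable {Ω : Type*} [Fintype Ω] {p : Ω → ℝ}

lemma pr_nonneg (hp : ∀ ω, 0 ≤ p ω) {α : Type*} [DecidableEq α] (X : Ω → α) (x : α) :
    0 ≤ pr p X x :=
  Finset.sum_nonneg fun ω _ => by split <;> simp [hp ω]

lemma pr_eq_of_iff {α β : Type*} [DecidableEq α] [DecidableEq β]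
    (A : Ω → α) (B : Ω → β) (a : α) (b : β) (h : ∀ ω, A ω = a ↔ B ω = b) :
    pr p A a = pr p B b :=
  Finset.sum_congr rfl fun ω _ => if_congr (h ω) rfl rfl

lemma pr_eq_zero_of_not {α : Type*} [DecidableEq α] (A : Ω → α) (a : α)
    (h : ∀ ω, A ω ≠ a) : pr p A a = 0 := by
  unfold pr; simp only [h, if_false, Finset.sum_const_zero]

lemma pr_mono (hp : ∀ ω, 0 ≤ p ω) {α β : Type*} [DecidableEq α] [DecidableEq β]
    (A : Ω → α) (B : Ω → β) (a : α) (b : β) (h : ∀ ω, A ω = a → B ω = b) :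
    pr p A a ≤ pr p B b := by
  refine Finset.sum_le_sum fun ω _ => ?_
  by_cases hA : A ω = a
  · simp [hA, h ω hA]
  · simp only [hA, if_false]
    split <;> simp [hp ω]

lemma pr_marg {α β : Type*} [DecidableEq α] [DecidableEq β] [Fintype β]
    (X : Ω → α) (Y : Ω → β) (x : α) :
    ∑ b : β, pr p (fun ω => (X ω, Y ω)) (x, b) = pr p X x := by
  unfold pr
  rw [Finset.sum_comm]
  refine Finset.sum_congr rfl fun ω _ => ?_
  simp only [Prod.mk.injEq, ite_and]
  by_cases hx : X ω = x
  · simp [hx]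
  · simp [hx]

/-- relabeling invariance of conditional entropy under injective maps. -/
lemma condEnt_relabel {α α' β β' : Type*}
    [Fintype α] [Fintype β] [Fintype α'] [Fintype β']
    [DecidableEq α] [DecidableEq β] [DecidableEq α'] [DecidableEq β']
    (Y : Ω → α) (X : Ω → β) (F : α → α') (G : β → β')
    (hF : Function.Injective F) (hG : Function.Injective G) :
    condEnt p (fun ω => F (Y ω)) (fun ω => G (X ω)) = condEnt p Y X := by
  unfold condEnt
  congr 1
  have hout : ∀ x' : β', x' ∉ Finset.univ.image G →
      (∑ y' : α', pr p (fun ω => (G (X ω), F (Y ω))) (x', y') *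
        Real.log (pr p (fun ω => (G (X ω), F (Y ω))) (x', y') / pr p (fun ω => G (X ω)) x')) = 0 := by
    intro x' hx'
    have : ∀ y', pr p (fun ω => (G (X ω), F (Y ω))) (x', y') = 0 := by
      intro y'
      refine pr_eq_zero_of_not _ _ fun ω hωeq => ?_
      exact hx' (Finset.mem_image.2 ⟨X ω, Finset.mem_univ _, (Prod.mk.injEq _ _ _ _ ▸ hωeq :
        _ ∧ _).1⟩)
    simp [this]
  rw [← Finset.sum_subset (Finset.subset_univ (Finset.univ.image G)) (fun x _ hx => hout x hx),
    Finset.sum_image (fun a _ b _ hab => hG hab)]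
  refine Finset.sum_congr rfl fun x _ => ?_
  have hout2 : ∀ y' : α', y' ∉ Finset.univ.image F →
      pr p (fun ω => (G (X ω), F (Y ω))) (G x, y') *
        Real.log (pr p (fun ω => (G (X ω), F (Y ω))) (G x, y') / pr p (fun ω => G (X ω)) (G x)) = 0 := by
    intro y' hy'
    have : pr p (fun ω => (G (X ω), F (Y ω))) (G x, y') = 0 := by
      refine pr_eq_zero_of_not _ _ fun ω hωeq => ?_
      exact hy' (Finset.mem_image.2 ⟨Y ω, Finset.mem_univ _, (Prod.mk.injEq _ _ _ _ ▸ hωeq :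
        _ ∧ _).2⟩)
    simp [this]
  rw [← Finset.sum_subset (Finset.subset_univ (Finset.univ.image F)) (fun y _ hy => hout2 y hy),
    Finset.sum_image (fun a _ b _ hab => hF hab)]
  refine Finset.sum_congr rfl fun yv _ => ?_
  have h1 : pr p (fun ω => (G (X ω), F (Y ω))) (G x, F yv) = pr p (fun ω => (X ω, Y ω)) (x, yv) := by
    refine pr_eq_of_iff _ _ _ _ fun ω => ?_
    simp only [Prod.mk.injEq]
    exact and_congr ⟨fun e => hG e, fun e => e ▸ rfl⟩ ⟨fun e => hF e, fun e => e ▸ rfl⟩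
  have h2 : pr p (fun ω => G (X ω)) (G x) = pr p X x := by
    refine pr_eq_of_iff _ _ _ _ fun ω => ⟨fun e => hG e, fun e => e ▸ rfl⟩
  rw [h1, h2]

lemma condEnt_relabel_fst {α α' β : Type*}
    [Fintype α] [Fintype β] [Fintype α']
    [DecidableEq α] [DecidableEq β] [DecidableEq α']
    (Y : Ω → α) (X : Ω → β) (F : α → α') (hF : Function.Injective F) :
    condEnt p (fun ω => F (Y ω)) X = condEnt p Y X := by
  have := condEnt_relabel (p := p) Y X F id hF Function.injective_id
  simpa using this

lemma condEnt_chain (hp : ∀ ω, 0 ≤ p ω)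
    {α γ δ : Type*} [Fintype α] [Fintype γ] [Fintype δ]
    [DecidableEq α] [DecidableEq γ] [DecidableEq δ]
    (A : Ω → α) (X : Ω → γ) (S : Ω → δ) :
    condEnt p A (fun ω => (X ω, S ω)) =
      condEnt p (fun ω => (A ω, S ω)) X - condEnt p S X := by
  unfold condEnt
  rw [Fintype.sum_prod_type]
  have hstep : ∀ x : γ, ∑ ys : α × δ,
      pr p (fun ω => (X ω, A ω, S ω)) (x, ys) *
        Real.log (pr p (fun ω => (X ω, A ω, S ω)) (x, ys) / pr p X x)
      = ∑ s : δ, ∑ a : α,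
      pr p (fun ω => ((X ω, S ω), A ω)) ((x, s), a) *
        Real.log (pr p (fun ω => ((X ω, S ω), A ω)) ((x, s), a) / pr p X x) := by
    intro x
    rw [Fintype.sum_prod_type, Finset.sum_comm]
    refine Finset.sum_congr rfl fun s _ => Finset.sum_congr rfl fun a _ => ?_
    have : pr p (fun ω => (X ω, A ω, S ω)) (x, a, s)
        = pr p (fun ω => ((X ω, S ω), A ω)) ((x, s), a) := by
      refine pr_eq_of_iff _ _ _ _ fun ω => ?_
      simp only [Prod.mk.injEq]; tauto
    rw [this]
  simp only [hstep]
  rw [sub_neg_eq_add, neg_add_eq_sub, neg_eq_iff_eq_neg, neg_sub]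
  rw [← Finset.sum_sub_distrib]
  refine Finset.sum_congr rfl fun x _ => ?_
  rw [← Finset.sum_sub_distrib]
  refine Finset.sum_congr rfl fun s _ => ?_
  set r := pr p (fun ω => (X ω, S ω)) (x, s) with hr
  set m := pr p X x with hm
  have hmarg : ∑ a : α, pr p (fun ω => ((X ω, S ω), A ω)) ((x, s), a) = r :=
    pr_marg (fun ω => (X ω, S ω)) A (x, s)
  have hrm : r ≤ m := pr_mono hp _ _ _ _ fun ω hω => by
    simpa using congrArg Prod.fst hω
  have hsum : r * Real.log (r / m)
      = ∑ a : α, pr p (fun ω => ((X ω, S ω), A ω)) ((x, s), a) * Real.log (r / m) := by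
    rw [← Finset.sum_mul, hmarg]
  rw [hsum]; rw [← Finset.sum_sub_distrib]
  refine Finset.sum_congr rfl fun a _ => ?_
  set q := pr p (fun ω => ((X ω, S ω), A ω)) ((x, s), a) with hqdef
  have hq0 : 0 ≤ q := pr_nonneg hp _ _
  have hqr : q ≤ r := pr_mono hp _ _ _ _ fun ω hω => by
    simpa using congrArg Prod.fst hω
  rcases eq_or_lt_of_le hq0 with hq | hq
  · simp [← hq]
  · have hrpos : 0 < r := lt_of_lt_of_le hq hqr
    have hmpos : 0 < m := lt_of_lt_of_le hrpos hrm
    rw [Real.log_div (ne_of_gt hq) (ne_of_gt hmpos),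
      Real.log_div (ne_of_gt hq) (ne_of_gt hrpos),
      Real.log_div (ne_of_gt hrpos) (ne_of_gt hmpos)]
    ring

lemma condMI_nonneg (hp : ∀ ω, 0 ≤ p ω)
    {α β γ : Type*} [Fintype α] [Fintype β] [Fintype γ]
    [DecidableEq α] [DecidableEq β] [DecidableEq γ]
    (A : Ω → α) (B : Ω → β) (C : Ω → γ) :
    0 ≤ condMI p A B C := by
  classical
  set T : γ → α → β → ℝ := fun c a b => pr p (fun ω => ((C ω, A ω), B ω)) ((c, a), b) with hT
  set TA : γ → α → ℝ := fun c a => pr p (fun ω => (C ω, A ω)) (c, a) with hTA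
  set TB : γ → β → ℝ := fun c b => pr p (fun ω => (C ω, B ω)) (c, b) with hTB
  set PC : γ → ℝ := fun c => pr p C c with hPC
  have hT0 : ∀ c a b, 0 ≤ T c a b := fun c a b => pr_nonneg hp _ _
  have hTA0 : ∀ c a, 0 ≤ TA c a := fun c a => pr_nonneg hp _ _
  have hTB0 : ∀ c b, 0 ≤ TB c b := fun c b => pr_nonneg hp _ _
  have hPC0 : ∀ c, 0 ≤ PC c := fun c => pr_nonneg hp _ _
  have hmargB : ∀ c a, ∑ b : β, T c a b = TA c a := fun c a =>
    pr_marg (fun ω => (C ω, A ω)) B (c, a)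
  have hmargA : ∀ c b, ∑ a : α, T c a b = TB c b := by
    intro c b
    simp only [hT, hTB]
    rw [← pr_marg (fun ω => (C ω, B ω)) A (c, b)]
    refine Finset.sum_congr rfl fun a _ => pr_eq_of_iff _ _ _ _ fun ω => ?_
    simp only [Prod.mk.injEq]; tauto
  have hmargC : ∀ c, ∑ a : α, TA c a = PC c := fun c => pr_marg C A c
  have hmargC' : ∀ c, ∑ b : β, TB c b = PC c := fun c => pr_marg C B c
  have hTleTA : ∀ c a b, T c a b ≤ TA c a := fun c a b =>
    pr_mono hp _ _ _ _ fun ω hω => by simpa using congrArg Prod.fst hω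
  have hTleTB : ∀ c a b, T c a b ≤ TB c b := fun c a b => by
    refine pr_mono hp _ _ _ _ fun ω hω => ?_
    simp only [Prod.mk.injEq] at hω ⊢
    exact ⟨hω.1.1, hω.2⟩
  have hTAlePC : ∀ c a, TA c a ≤ PC c := fun c a =>
    pr_mono hp _ _ _ _ fun ω hω => by simpa using congrArg Prod.fst hω
  have hMI : condMI p A B C = ∑ c : γ, ∑ a : α, ∑ b : β,
      (T c a b * Real.log (T c a b / PC c)
        - T c a b * Real.log (TA c a / PC c)
        - T c a b * Real.log (TB c b / PC c)) := by
    unfold condMI condEnt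
    have e1 : ∀ c : γ, ∑ a : α, TA c a * Real.log (TA c a / PC c)
        = ∑ a : α, ∑ b : β, T c a b * Real.log (TA c a / PC c) := by
      intro c
      refine Finset.sum_congr rfl fun a _ => ?_
      rw [← Finset.sum_mul, hmargB]
    have e2 : ∀ c : γ, ∑ b : β, TB c b * Real.log (TB c b / PC c)
        = ∑ a : α, ∑ b : β, T c a b * Real.log (TB c b / PC c) := by
      intro c
      rw [Finset.sum_comm]
      refine Finset.sum_congr rfl fun b _ => ?_
      rw [← Finset.sum_mul, hmargA]
    have e3 : ∀ c : γ, ∑ ab : α × β,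
        pr p (fun ω => (C ω, A ω, B ω)) (c, ab) *
          Real.log (pr p (fun ω => (C ω, A ω, B ω)) (c, ab) / PC c)
        = ∑ a : α, ∑ b : β, T c a b * Real.log (T c a b / PC c) := by
      intro c
      rw [Fintype.sum_prod_type]
      refine Finset.sum_congr rfl fun a _ => Finset.sum_congr rfl fun b _ => ?_
      have : pr p (fun ω => (C ω, A ω, B ω)) (c, a, b) = T c a b := by
        refine pr_eq_of_iff _ _ _ _ fun ω => ?_
        simp only [Prod.mk.injEq]; tauto
      rw [this]
    simp only [hT, hTA, hTB, hPC] at e1 e2 e3 ⊢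
    simp only [e1, e2, e3]
    simp only [Finset.sum_sub_distrib]
    ring
  rw [hMI]
  have key : ∀ (c : γ) (a : α) (b : β),
      T c a b - (if 0 < PC c then TA c a * TB c b / PC c else 0)
        ≤ T c a b * Real.log (T c a b / PC c)
          - T c a b * Real.log (TA c a / PC c)
          - T c a b * Real.log (TB c b / PC c) := by
    intro c a b
    rcases eq_or_lt_of_le (hT0 c a b) with hTz | hTpos
    · have h1 : (0:ℝ) ≤ (if 0 < PC c then TA c a * TB c b / PC c else 0) := by
        split_ifs with hpc
        · exact div_nonneg (mul_nonneg (hTA0 c a) (hTB0 c b)) (hPC0 c)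
        · exact le_rfl
      rw [← hTz]
      simp only [zero_mul, sub_self, zero_sub]
      linarith
    · have hTApos : 0 < TA c a := lt_of_lt_of_le hTpos (hTleTA c a b)
      have hTBpos : 0 < TB c b := lt_of_lt_of_le hTpos (hTleTB c a b)
      have hPCpos : 0 < PC c := lt_of_lt_of_le hTApos (hTAlePC c a)
      rw [if_pos hPCpos]
      have hx : (0:ℝ) < TA c a * TB c b / (T c a b * PC c) := by positivity
      have hlog := Real.log_le_sub_one_of_pos hx
      have h2 : T c a b * Real.log (TA c a * TB c b / (T c a b * PC c))
          ≤ T c a b * (TA c a * TB c b / (T c a b * PC c) - 1) :=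
        mul_le_mul_of_nonneg_left hlog (le_of_lt hTpos)
      have h3 : T c a b * (TA c a * TB c b / (T c a b * PC c) - 1)
          = TA c a * TB c b / PC c - T c a b := by
        field_simp
      have hexp : Real.log (TA c a * TB c b / (T c a b * PC c))
          = Real.log (TA c a) + Real.log (TB c b) - Real.log (T c a b) - Real.log (PC c) := by
        rw [Real.log_div (by positivity) (by positivity),
          Real.log_mul (ne_of_gt hTApos) (ne_of_gt hTBpos),
          Real.log_mul (ne_of_gt hTpos) (ne_of_gt hPCpos)]
        ring
      rw [Real.log_div (ne_of_gt hTpos) (ne_of_gt hPCpos),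
        Real.log_div (ne_of_gt hTApos) (ne_of_gt hPCpos),
        Real.log_div (ne_of_gt hTBpos) (ne_of_gt hPCpos)]
      rw [hexp, h3] at h2
      nlinarith [h2]
  have hzero : ∑ c : γ, ∑ a : α, ∑ b : β,
      (T c a b - (if 0 < PC c then TA c a * TB c b / PC c else 0)) = 0 := by
    have perc : ∀ c : γ, ∑ a : α, ∑ b : β,
        (T c a b - (if 0 < PC c then TA c a * TB c b / PC c else 0)) = 0 := by
      intro c
      have hTsum : ∑ a : α, ∑ b : β, T c a b = PC c := by
        rw [← hmargC c]
        exact Finset.sum_congr rfl fun a _ => hmargB c a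
      by_cases hc : 0 < PC c
      · simp only [hc, if_true]
        simp only [Finset.sum_sub_distrib]
        rw [hTsum]
        have : ∑ a : α, ∑ b : β, TA c a * TB c b / PC c = PC c := by
          have : ∀ a : α, ∑ b : β, TA c a * TB c b / PC c = TA c a * PC c / PC c := by
            intro a
            rw [← Finset.sum_div, ← Finset.mul_sum, hmargC']
          rw [Finset.sum_congr rfl fun a _ => this a, ← Finset.sum_div, ← Finset.sum_mul,
            hmargC]
          field_simp
        rw [this, sub_self]
      · simp only [hc, if_false, sub_zero]
        rw [hTsum]
        exact le_antisymm (not_lt.mp hc) (hPC0 c)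
    exact Finset.sum_eq_zero fun c _ => perc c
  calc (0:ℝ) = ∑ c : γ, ∑ a : α, ∑ b : β,
        (T c a b - (if 0 < PC c then TA c a * TB c b / PC c else 0)) := hzero.symm
    _ ≤ _ := by
        refine Finset.sum_le_sum fun c _ => Finset.sum_le_sum fun a _ =>
          Finset.sum_le_sum fun b _ => key c a b

/-- Chain rule for conditional mutual information. -/
lemma condMI_chain (hp : ∀ ω, 0 ≤ p ω)
    {α β γ δ : Type*} [Fintype α] [Fintype β] [Fintype γ] [Fintype δ]
    [DecidableEq α] [DecidableEq β] [DecidableEq γ] [DecidableEq δ]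
    (A : Ω → α) (Bv : Ω → β) (D : Ω → δ) (X : Ω → γ) :
    condMI p A (fun ω => (Bv ω, D ω)) X
      = condMI p A D X + condMI p A Bv (fun ω => (X ω, D ω)) := by
  unfold condMI
  rw [condEnt_chain hp A X D, condEnt_chain hp Bv X D,
    condEnt_chain hp (fun ω => (A ω, Bv ω)) X D]
  have hassoc : condEnt p (fun ω => (A ω, (Bv ω, D ω))) X
      = condEnt p (fun ω => ((A ω, Bv ω), D ω)) X := by
    exact condEnt_relabel_fst (fun ω => ((A ω, Bv ω), D ω)) X
      (fun t => (t.1.1, (t.1.2, t.2))) (Equiv.prodAssoc α β δ).injective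
  rw [hassoc]
  ring

/-- Adjoining a deterministic function does not change conditional MI. -/
lemma condMI_det {α γ δ ε : Type*} [Fintype α] [Fintype γ] [Fintype δ] [Fintype ε]
    [DecidableEq α] [DecidableEq γ] [DecidableEq δ] [DecidableEq ε]
    (A : Ω → α) (W : Ω → δ) (f : δ → ε) (X : Ω → γ) :
    condMI p A (fun ω => (W ω, f (W ω))) X = condMI p A W X := by
  unfold condMI
  have h1 : condEnt p (fun ω => (W ω, f (W ω))) X = condEnt p W X :=
    condEnt_relabel_fst W X (fun w => (w, f w)) (fun a b hab => congrArg Prod.fst hab)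
  have h2 : condEnt p (fun ω => (A ω, (W ω, f (W ω)))) X
      = condEnt p (fun ω => (A ω, W ω)) X :=
    condEnt_relabel_fst (fun ω => (A ω, W ω)) X (fun t => (t.1, (t.2, f t.2)))
      (fun a b hab => by
        have h1 := congrArg Prod.fst hab
        have h2 := congrArg (fun t => t.2.1) hab
        exact Prod.ext_iff.2 ⟨h1, h2⟩)
  rw [h1, h2]

/-- Data processing inequality for deterministic maps. -/
lemma condMI_dpi (hp : ∀ ω, 0 ≤ p ω)
    {α γ δ ε : Type*} [Fintype α] [Fintype γ] [Fintype δ] [Fintype ε]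
    [DecidableEq α] [DecidableEq γ] [DecidableEq δ] [DecidableEq ε]
    (A : Ω → α) (W : Ω → δ) (f : δ → ε) (X : Ω → γ) :
    condMI p A (fun ω => f (W ω)) X ≤ condMI p A W X := by
  have hdet := condMI_det (p := p) A W f X
  have hch := condMI_chain hp A W (fun ω => f (W ω)) X
  have hnn := condMI_nonneg hp A W (fun ω => (X ω, f (W ω)))
  linarith

end Aux

/-- Pipeline decomposition: with `S = g ∘ Z` and `Z = h ∘ E`,
`I(H; y | X, S) ≤ I(H; y | X, E) + [I(H;E|X) − I(H;Z|X)] + [I(H;Z|X) − I(H;S|X)]`,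
and each bracketed term is non-negative. -/
theorem stmt_4 {Ω : Type*} [Fintype Ω] (p : Ω → ℝ)
    (hp : ∀ ω, 0 ≤ p ω) (hp1 : ∑ ω, p ω = 1)
    {𝒳 ℋ ℰ 𝒵 𝒮 𝒴 : Type*} [Fintype 𝒳] [Fintype ℋ] [Fintype ℰ] [Fintype 𝒵]
    [Fintype 𝒮] [Fintype 𝒴]
    [DecidableEq 𝒳] [DecidableEq ℋ] [DecidableEq ℰ] [DecidableEq 𝒵]
    [DecidableEq 𝒮] [DecidableEq 𝒴]
    (X : Ω → 𝒳) (H : Ω → ℋ) (E : Ω → ℰ) (y : Ω → 𝒴)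
    (h : ℰ → 𝒵) (g : 𝒵 → 𝒮) (Z : Ω → 𝒵) (S : Ω → 𝒮)
    (hZ : Z = fun ω => h (E ω)) (hS : S = fun ω => g (Z ω)) :
    condMI p H y (fun ω => (X ω, S ω))
        ≤ condMI p H y (fun ω => (X ω, E ω))
          + (condMI p H E X - condMI p H Z X)
          + (condMI p H Z X - condMI p H S X) ∧
    0 ≤ condMI p H E X - condMI p H Z X ∧
    0 ≤ condMI p H Z X - condMI p H S X := by
  have hSE : (fun ω => (y ω, S ω)) = fun ω => ((fun t : 𝒴 × ℰ => (t.1, g (h t.2))) ((y ω, E ω))) := by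
    funext ω
    simp [hS, hZ]
  refine ⟨?_, ?_, ?_⟩
  · have chain1 := condMI_chain hp H y S X
    have chain2 := condMI_chain hp H y E X
    have dpi : condMI p H (fun ω => (y ω, S ω)) X ≤ condMI p H (fun ω => (y ω, E ω)) X := by
      rw [hSE]
      exact condMI_dpi hp H (fun ω => (y ω, E ω)) (fun t => (t.1, g (h t.2))) X
    linarith
  · have := condMI_dpi hp H E h X
    rw [hZ]
    linarith
  · have := condMI_dpi hp H Z g X
    rw [hS]
    linarith
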